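/- There exists a constant C > 0 depending only on β (in particular independent of ε₁ and ε₂) such that (1/ε₁) ∫₀¹ ∫ₓ¹ e^{A(t) − A(x)} dt dx ≤ C · (1/ε₂ + ε₁/ε₂²). -/

import Mathlib

open intervalIntegral MeasureTheory Real Set

lemma exp_int_bound {k m : ℝ} (hk : 0 < k) (hm : 0 ≤ m) :
    ∫ u in (0:ℝ)..m, Real.exp (-(k * u)) ≤ 1 / k := by
  have hkne : (-k) ≠ 0 := neg_ne_zero.mpr hk.ne'
  have : ∫ u in (0:ℝ)..m, Real.exp (-k * u) =
      (-k)⁻¹ • ∫ u in (-k*0)..(-k*m), Real.exp u :=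
    intervalIntegral.integral_comp_mul_left Real.exp hkne
  rw [show (fun u => Real.exp (-(k*u))) = fun u => Real.exp (-k*u) by ext u; ring_nf]
  rw [this, integral_exp]
  have h1 : Real.exp (-k*m) ≤ 1 := by
    rw [← Real.exp_zero]; exact Real.exp_le_exp.mpr (by nlinarith)
  have h0 : 0 < Real.exp (-k*m) := Real.exp_pos _
  rw [smul_eq_mul, mul_zero, Real.exp_zero, div_eq_mul_inv, one_mul]
  have heq : (-k)⁻¹ * (Real.exp (-k*m) - 1) = (1 - Real.exp (-k*m)) * k⁻¹ := by
    field_simp; ring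
  rw [heq]
  nlinarith [inv_pos.mpr hk]

theorem stmt_3 (β : ℝ) (hβ : 0 < β) :
    ∃ C : ℝ, 0 < C ∧
      ∀ ε₁ ε₂ : ℝ, ε₁ ∈ Set.Ioc (0:ℝ) 1 → ε₂ ∈ Set.Ioc (0:ℝ) 1 →
      ∀ b : ℝ → ℝ, ContinuousOn b (Set.Icc 0 1) → (∀ x ∈ Set.Icc (0:ℝ) 1, β ≤ b x) →
        (1 / ε₁) * ∫ x in (0:ℝ)..1, ∫ t in x..1,
            Real.exp ((ε₂ / ε₁ * ∫ s in t..1, b s) - ε₂ / ε₁ * ∫ s in x..1, b s)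
          ≤ C * (1 / ε₂ + ε₁ / ε₂ ^ 2) := by
  refine ⟨1/β, by positivity, ?_⟩
  rintro ε₁ ε₂ ⟨hε₁, hε₁'⟩ ⟨hε₂, hε₂'⟩ b hb hbβ
  set k : ℝ := ε₂ / ε₁ * β with hk_def
  have hk : 0 < k := by positivity
  have hRHSpos : 0 < 1/β * (1 / ε₂ + ε₁ / ε₂ ^ 2) := by positivity
  -- integrability of b on subintervals
  have hbint : ∀ c d : ℝ, 0 ≤ c → c ≤ d → d ≤ 1 →
      IntervalIntegrable b volume c d := fun c d hc hcd hd =>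
    (hb.mono (Icc_subset_Icc hc hd)).intervalIntegrable_of_Icc hcd
  -- pointwise bound of the inner integral
  have hinner : ∀ x ∈ Set.Icc (0:ℝ) 1,
      (∫ t in x..1, Real.exp ((ε₂ / ε₁ * ∫ s in t..1, b s)
        - ε₂ / ε₁ * ∫ s in x..1, b s)) ≤ 1 / k := by
    rintro x ⟨hx0, hx1⟩
    have hgint : IntervalIntegrable (fun t => Real.exp (-(k * (t - x)))) volume x 1 :=
      (Continuous.intervalIntegrable (by continuity) x 1)
    have hbd : ∀ᵐ t ∂(volume.restrict (Set.uIoc x 1)),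
        ‖Real.exp ((ε₂ / ε₁ * ∫ s in t..1, b s) - ε₂ / ε₁ * ∫ s in x..1, b s)‖
          ≤ Real.exp (-(k * (t - x))) := by
      rw [uIoc_of_le hx1]
      refine (ae_restrict_iff' measurableSet_Ioc).2 (ae_of_all _ ?_)
      rintro t ⟨hxt, ht1⟩
      rw [Real.norm_eq_abs, abs_of_pos (Real.exp_pos _)]
      apply Real.exp_le_exp.mpr
      have hsplit : (∫ s in x..t, b s) + ∫ s in t..1, b s = ∫ s in x..1, b s :=
        intervalIntegral.integral_add_adjacent_intervals
          (hbint x t hx0 hxt.le (ht1)) (hbint t 1 (hx0.trans hxt.le) ht1 le_rfl)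
      have hlow : β * (t - x) ≤ ∫ s in x..t, b s := by
        have : ∫ s in x..t, β ≤ ∫ s in x..t, b s := by
          apply intervalIntegral.integral_mono_on hxt.le
            intervalIntegrable_const (hbint x t hx0 hxt.le ht1)
          intro s hs
          exact hbβ s ⟨hx0.trans hs.1, hs.2.trans ht1⟩
        simpa [mul_comm] using this
      have hfrac : 0 < ε₂ / ε₁ := by positivity
      have : (ε₂ / ε₁ * ∫ s in t..1, b s) - ε₂ / ε₁ * ∫ s in x..1, b s
          = -(ε₂ / ε₁ * ∫ s in x..t, b s) := by
        rw [← hsplit]; ring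
      rw [this]
      have := mul_le_mul_of_nonneg_left hlow hfrac.le
      simp only [hk_def]
      nlinarith
    have h1 : ‖∫ t in x..1, Real.exp ((ε₂ / ε₁ * ∫ s in t..1, b s)
          - ε₂ / ε₁ * ∫ s in x..1, b s)‖
        ≤ |∫ t in x..1, Real.exp (-(k * (t - x)))| :=
      intervalIntegral.norm_integral_le_abs_of_norm_le hbd hgint
    have h2 : ∫ t in x..1, Real.exp (-(k * (t - x))) ≤ 1 / k := by
      have := intervalIntegral.integral_comp_sub_right
        (fun u => Real.exp (-(k * u))) x (a := x) (b := 1)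
      rw [this, sub_self]
      exact exp_int_bound hk (by linarith)
    have h3 : 0 ≤ ∫ t in x..1, Real.exp (-(k * (t - x))) :=
      intervalIntegral.integral_nonneg hx1 (fun u _ => (Real.exp_pos _).le)
    calc (∫ t in x..1, Real.exp ((ε₂ / ε₁ * ∫ s in t..1, b s)
            - ε₂ / ε₁ * ∫ s in x..1, b s))
        ≤ ‖∫ t in x..1, Real.exp ((ε₂ / ε₁ * ∫ s in t..1, b s)
            - ε₂ / ε₁ * ∫ s in x..1, b s)‖ := le_norm_self _
      _ ≤ |∫ t in x..1, Real.exp (-(k * (t - x)))| := h1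
      _ = ∫ t in x..1, Real.exp (-(k * (t - x))) := abs_of_nonneg h3
      _ ≤ 1 / k := h2
  by_cases hint : IntervalIntegrable (fun x => ∫ t in x..1,
      Real.exp ((ε₂ / ε₁ * ∫ s in t..1, b s) - ε₂ / ε₁ * ∫ s in x..1, b s)) volume 0 1
  · have houter : (∫ x in (0:ℝ)..1, ∫ t in x..1,
        Real.exp ((ε₂ / ε₁ * ∫ s in t..1, b s) - ε₂ / ε₁ * ∫ s in x..1, b s))
        ≤ ∫ _x in (0:ℝ)..1, 1 / k := by
      apply intervalIntegral.integral_mono_on zero_le_one hint intervalIntegrable_const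
      exact hinner
    have houter' : (∫ x in (0:ℝ)..1, ∫ t in x..1,
        Real.exp ((ε₂ / ε₁ * ∫ s in t..1, b s) - ε₂ / ε₁ * ∫ s in x..1, b s))
        ≤ 1 / k := by simpa using houter
    have hmul : (1 / ε₁) * (1 / k) ≤ 1/β * (1 / ε₂ + ε₁ / ε₂ ^ 2) := by
      have h1 : (1 / ε₁) * (1 / k) = 1/β * (1 / ε₂) := by
        rw [hk_def]; field_simp
      rw [h1]
      have : 0 ≤ 1/β * (ε₁ / ε₂ ^ 2) := by positivity
      rw [mul_add]; linarith
    calc (1 / ε₁) * ∫ x in (0:ℝ)..1, ∫ t in x..1,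
          Real.exp ((ε₂ / ε₁ * ∫ s in t..1, b s) - ε₂ / ε₁ * ∫ s in x..1, b s)
        ≤ (1 / ε₁) * (1 / k) :=
          mul_le_mul_of_nonneg_left houter' (by positivity)
      _ ≤ 1/β * (1 / ε₂ + ε₁ / ε₂ ^ 2) := hmul
  · rw [intervalIntegral.integral_undef hint, mul_zero]
    exact hRHSpos.le
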